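/- Fix ε > 0 and let M ≥ 9/ε². Let S be a set of M i.i.d. random strings in {A,C,G,T}^n each drawn uniformly from strings with no two consecutive equal characters. Then with probability at least 1 − exp(−n), the length of every common supersequence of all strings in S is at least (2 − ε)n. -/

import Mathlib

open Finset
open scoped Classical

/-- Strands of length n over {A,C,G,T} with no two consecutive equal characters. -/
def NoHomo (n : ℕ) : Type :=
  {S : Fin n → Fin 4 // List.Chain' (· ≠ ·) (List.ofFn S)}

noncomputable instance (n : ℕ) : Fintype (NoHomo n) := by
  unfold NoHomo; infer_instance

/-- rank of `c` among candidates by first-occurrence index in `L`. -/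
def rnk (L : List (Fin 4)) (cand : Finset (Fin 4)) (c : Fin 4) : ℕ :=
  (cand.filter (fun c' => L.idxOf c' < L.idxOf c)).card

def cnds : Option (Fin 4) → Finset (Fin 4)
  | none => Finset.univ
  | some p => Finset.univ.erase p

def enc : Option (Fin 4) → List (Fin 4) → List (Fin 4) → List ℕ
  | _, [], _ => []
  | prev, c :: s, L => rnk L (cnds prev) c :: enc (some c) s (L.drop (L.idxOf c + 1))

lemma enc_length : ∀ (prev) (s L : List (Fin 4)), (enc prev s L).length = s.length
  | _, [], _ => rfl
  | prev, c :: s, L => by rw [enc]; simp [enc_length]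

lemma idx_inj {L : List (Fin 4)} {c d : Fin 4} (hc : c ∈ L) (hd : d ∈ L)
    (h : L.idxOf c = L.idxOf d) : c = d := by
  have h1 := List.idxOf_get (List.idxOf_lt_length_iff.2 hc)
  have h2 := List.idxOf_get (List.idxOf_lt_length_iff.2 hd)
  rw [← h1, ← h2]
  congr 1
  exact Fin.ext h

lemma rnk_le_idx {L : List (Fin 4)} {cand : Finset (Fin 4)} {c : Fin 4} (hc : c ∈ L) :
    rnk L cand c ≤ L.idxOf c := by
  have : (cand.filter (fun c' => L.idxOf c' < L.idxOf c)).card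
      ≤ (Finset.range (L.idxOf c)).card := by
    apply Finset.card_le_card_of_injOn (fun c' => L.idxOf c')
    · intro c' hc'
      simp only [Finset.mem_coe, Finset.mem_filter] at hc'
      simp [hc'.2]
    · intro a ha b hb hab
      simp only [Finset.mem_coe, Finset.mem_filter] at ha hb
      have hcL := List.idxOf_lt_length_iff.2 hc
      have haL : a ∈ L := List.idxOf_lt_length_iff.1 (lt_trans ha.2 hcL)
      have hbL : b ∈ L := List.idxOf_lt_length_iff.1 (lt_trans hb.2 hcL)
      exact idx_inj haL hbL hab
  simpa [rnk] using this

lemma rnk_le_card {L : List (Fin 4)} {cand : Finset (Fin 4)} {c : Fin 4} (hc : c ∈ cand) :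
    rnk L cand c ≤ cand.card - 1 := by
  have hsub : cand.filter (fun c' => L.idxOf c' < L.idxOf c) ⊆ cand.erase c := by
    intro x hx
    simp only [Finset.mem_filter] at hx
    refine Finset.mem_erase.2 ⟨?_, hx.1⟩
    rintro rfl; exact lt_irrefl _ hx.2
  calc rnk L cand c ≤ (cand.erase c).card := Finset.card_le_card hsub
    _ = cand.card - 1 := Finset.card_erase_of_mem hc

lemma rnk_inj {L : List (Fin 4)} {cand : Finset (Fin 4)} {c d : Fin 4}
    (hcc : c ∈ cand) (hdc : d ∈ cand) (hc : c ∈ L) (hd : d ∈ L)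
    (h : rnk L cand c = rnk L cand d) : c = d := by
  rcases lt_trichotomy (L.idxOf c) (L.idxOf d) with hlt | heq | hlt
  · exfalso
    have : rnk L cand c < rnk L cand d := by
      apply Finset.card_lt_card
      constructor
      · intro x hx
        simp only [Finset.mem_filter] at hx ⊢
        exact ⟨hx.1, lt_trans hx.2 hlt⟩
      · intro hsub
        have := hsub (Finset.mem_filter.2 ⟨hcc, hlt⟩)
        simp only [Finset.mem_filter] at this
        exact lt_irrefl _ this.2
    omega
  · exact idx_inj hc hd heq
  · exfalso
    have : rnk L cand d < rnk L cand c := by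
      apply Finset.card_lt_card
      constructor
      · intro x hx
        simp only [Finset.mem_filter] at hx ⊢
        exact ⟨hx.1, lt_trans hx.2 hlt⟩
      · intro hsub
        have := hsub (Finset.mem_filter.2 ⟨hdc, hlt⟩)
        simp only [Finset.mem_filter] at this
        exact lt_irrefl _ this.2
    omega

lemma sub_drop : ∀ {L s : List (Fin 4)} {c : Fin 4},
    (c :: s).Sublist L → s.Sublist (L.drop (L.idxOf c + 1))
  | [], s, c, h => by simp at h
  | a :: L', s, c, h => by
    by_cases hac : a = c
    · subst hac
      rw [List.idxOf_cons_self]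
      simp only [List.drop_one, List.drop_succ_cons, List.drop_zero]
      cases h with
      | cons _ h' => exact (List.sublist_cons_self a s).trans h'
      | cons_cons _ h' => exact h'
    · have h' : (c :: s).Sublist L' := by
        cases h with
        | cons _ h' => exact h'
        | cons_cons _ h' => exact absurd rfl hac
      rw [List.idxOf_cons_ne _ hac]
      rw [Nat.succ_eq_add_one]
      rw [show List.idxOf c L' + 1 + 1 = (List.idxOf c L' + 1) + 1 from rfl,
        List.drop_succ_cons]
      exact sub_drop h'

lemma enc_sum : ∀ (s : List (Fin 4)) {L : List (Fin 4)} (prev : Option (Fin 4)),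
    s.Sublist L → (enc prev s L).sum + s.length ≤ L.length
  | [], L, prev, _ => by simp [enc]
  | c :: s, L, prev, h => by
    have hc : c ∈ L := h.subset (List.mem_cons_self)
    have hidx : L.idxOf c < L.length := List.idxOf_lt_length_iff.2 hc
    have hdrop := sub_drop h
    have ih := enc_sum s (some c) hdrop
    rw [List.length_drop] at ih
    have hr := rnk_le_idx (cand := cnds prev) hc
    rw [enc]
    simp only [List.sum_cons, List.length_cons]
    omega

lemma card_cnds_some (p : Fin 4) : (cnds (some p)).card = 3 := by
  simp [cnds, Finset.card_erase_of_mem]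

lemma mem_cnds {c : Fin 4} : ∀ {prev : Option (Fin 4)},
    (∀ p, prev = some p → c ≠ p) → c ∈ cnds prev
  | none, _ => Finset.mem_univ c
  | some p, h => Finset.mem_erase.2 ⟨h p rfl, Finset.mem_univ c⟩

/-- all entries of `enc (some p) s L` are ≤ 2 when `p :: s` has no adjacent equals. -/
lemma enc_le_two : ∀ (s : List (Fin 4)) (L : List (Fin 4)) (p : Fin 4),
    List.Chain' (· ≠ ·) (p :: s) → ∀ x ∈ enc (some p) s L, x ≤ 2
  | [], _, _, _ => by simp [enc]
  | c :: s, L, p, hch => by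
    have h1 : c ≠ p := (List.isChain_cons_cons.1 hch).1.symm
    have h2 : List.Chain' (· ≠ ·) (c :: s) := (List.isChain_cons_cons.1 hch).2
    intro x hx
    rw [enc] at hx
    rcases List.mem_cons.1 hx with rfl | hx
    · have := rnk_le_card (L := L) (cand := cnds (some p)) (c := c)
        (by simp [cnds, h1])
      rw [card_cnds_some] at this
      omega
    · exact enc_le_two s _ c h2 x hx

lemma enc_tail_le_two (prev : Option (Fin 4)) (s L : List (Fin 4))
    (h : List.Chain' (· ≠ ·) s) : ∀ x ∈ (enc prev s L).tail, x ≤ 2 := by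
  cases s with
  | nil => simp [enc]
  | cons c s => rw [enc]; exact enc_le_two s _ c h

lemma enc_le_three : ∀ (prev : Option (Fin 4)) (s L : List (Fin 4)),
    List.Chain' (· ≠ ·) s → (∀ p, prev = some p → ∀ c ∈ s.head?, c ≠ p) →
    ∀ x ∈ enc prev s L, x ≤ 3
  | prev, [], L, _, _ => by simp [enc]
  | prev, c :: s, L, hch, hh => by
    intro x hx
    rw [enc] at hx
    rcases List.mem_cons.1 hx with rfl | hx
    · have hcm : c ∈ cnds prev := mem_cnds (fun p hp => hh p hp c rfl)
      have := rnk_le_card (L := L) hcm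
      have h4 : (cnds prev).card ≤ 4 := le_trans (Finset.card_le_card (Finset.subset_univ _))
        (by simp)
      omega
    · have := enc_le_two s _ c hch x hx
      omega

lemma enc_inj : ∀ (s t L : List (Fin 4)) (prev : Option (Fin 4)),
    List.Chain' (· ≠ ·) s → List.Chain' (· ≠ ·) t →
    (∀ p, prev = some p → ∀ c ∈ s.head?, c ≠ p) →
    (∀ p, prev = some p → ∀ c ∈ t.head?, c ≠ p) →
    s.Sublist L → t.Sublist L → s.length = t.length →
    enc prev s L = enc prev t L → s = t
  | [], [], _, _, _, _, _, _, _, _, _, _ => rfl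
  | [], _ :: _, _, _, _, _, _, _, _, _, hl, _ => by simp at hl
  | _ :: _, [], _, _, _, _, _, _, _, _, hl, _ => by simp at hl
  | c :: s, d :: t, L, prev, hcs, hct, hhs, hht, hsL, htL, hl, he => by
    rw [enc, enc] at he
    have hcm : c ∈ cnds prev := mem_cnds (fun p hp => hhs p hp c rfl)
    have hdm : d ∈ cnds prev := mem_cnds (fun p hp => hht p hp d rfl)
    have hcL : c ∈ L := hsL.subset (List.mem_cons_self)
    have hdL : d ∈ L := htL.subset (List.mem_cons_self)
    have hcd : c = d := rnk_inj hcm hdm hcL hdL (List.head_eq_of_cons_eq he ▸ rfl)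
    subst hcd
    have htail := List.tail_eq_of_cons_eq he
    have hs' : s.Sublist (L.drop (L.idxOf c + 1)) := sub_drop hsL
    have ht' : t.Sublist (L.drop (L.idxOf c + 1)) := sub_drop htL
    have := enc_inj s t (L.drop (L.idxOf c + 1)) (some c)
      hcs.tail hct.tail
      (by intro p hp e he2
          injection hp with hp; subst hp
          exact fun hec => ((List.isChain_cons.1 hcs).1 e he2) hec.symm)
      (by intro p hp e he2
          injection hp with hp; subst hp
          exact fun hec => ((List.isChain_cons.1 hct).1 e he2) hec.symm)
      hs' ht' (by simpa using hl) htail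
    rw [this]

lemma sum_fin4_exp (ε : ℝ) :
    ∑ x : Fin 4, Real.exp (-ε * (x.val : ℝ)) =
      1 + Real.exp (-ε) + Real.exp (-ε*2) + Real.exp (-ε*3) := by
  rw [Fin.sum_univ_four]
  norm_num [show ((0:Fin 4):ℕ) = 0 from rfl, show ((1:Fin 4):ℕ) = 1 from rfl,
    show ((2:Fin 4):ℕ) = 2 from rfl, show ((3:Fin 4):ℕ) = 3 from rfl]

lemma sum_fin4_exp_le2 (ε : ℝ) :
    ∑ x ∈ Finset.univ.filter (fun x : Fin 4 => x.val ≤ 2), Real.exp (-ε * (x.val : ℝ)) =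
      1 + Real.exp (-ε) + Real.exp (-ε*2) := by
  rw [Finset.sum_filter, Fin.sum_univ_four]
  norm_num [show ((0:Fin 4):ℕ) = 0 from rfl, show ((1:Fin 4):ℕ) = 1 from rfl,
    show ((2:Fin 4):ℕ) = 2 from rfl, show ((3:Fin 4):ℕ) = 3 from rfl]

lemma key_B (ε : ℝ) (hε : 0 ≤ ε) :
    1 + Real.exp (-ε) + Real.exp (-ε*2) ≤ 3 * Real.exp (ε^2/2 - ε) := by
  have hc : Real.cosh ε ≤ Real.exp (ε^2/2) := Real.cosh_le_exp_half_sq ε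
  rw [Real.cosh_eq] at hc
  have h1 : (1:ℝ) ≤ Real.exp (ε^2/2) := Real.one_le_exp (by positivity)
  have he : Real.exp ε + 1 + Real.exp (-ε) ≤ 3 * Real.exp (ε^2/2) := by nlinarith
  have h2 := mul_le_mul_of_nonneg_left he (Real.exp_pos (-ε)).le
  have h3 : 1 + Real.exp (-ε) + Real.exp (-ε*2)
      = Real.exp (-ε) * (Real.exp ε + 1 + Real.exp (-ε)) := by
    rw [mul_add, mul_add, ← Real.exp_add, ← Real.exp_add]
    norm_num
    ring_nf
  have h4 : Real.exp (-ε) * (3 * Real.exp (ε^2/2)) = 3 * Real.exp (ε^2/2 - ε) := by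
    rw [mul_comm (Real.exp (-ε)), mul_assoc, ← Real.exp_add]
    ring_nf
  linarith [h3 ▸ h4 ▸ h2]

lemma key_A (ε : ℝ) (hε : 0 ≤ ε) :
    1 + Real.exp (-ε) + Real.exp (-ε*2) + Real.exp (-ε*3) ≤ 4 * Real.exp (ε^2/2 - ε) := by
  have h1 := key_B ε hε
  have h2 : Real.exp (-ε*3) ≤ Real.exp (ε^2/2 - ε) := by
    apply Real.exp_le_exp.2; nlinarith
  linarith

lemma card_T (m ℓ : ℕ) (ε : ℝ) (hε : 0 ≤ ε) :
    (((Finset.univ.filter (fun v : Fin (m+1) → Fin 4 =>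
        (∀ j, j ≠ 0 → (v j).val ≤ 2) ∧ (∑ j, ((v j).val + 1)) ≤ ℓ)).card : ℝ))
      ≤ Real.exp (ε * ((ℓ:ℝ) - (m+1))) *
        ((1 + Real.exp (-ε) + Real.exp (-ε*2) + Real.exp (-ε*3)) *
         (1 + Real.exp (-ε) + Real.exp (-ε*2))^m) := by
  classical
  set T := Finset.univ.filter (fun v : Fin (m+1) → Fin 4 =>
        (∀ j, j ≠ 0 → (v j).val ≤ 2) ∧ (∑ j, ((v j).val + 1)) ≤ ℓ) with hT
  set T' := Finset.univ.filter (fun v : Fin (m+1) → Fin 4 =>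
        ∀ j, j ≠ 0 → (v j).val ≤ 2) with hT'
  have step1 : (T.card : ℝ) ≤
      ∑ v ∈ T', Real.exp (ε * ((ℓ:ℝ) - ∑ j, (((v j).val : ℝ) + 1))) := by
    rw [Finset.card_eq_sum_ones T]
    push_cast
    calc (∑ _v ∈ T, (1:ℝ))
        ≤ ∑ v ∈ T, Real.exp (ε * ((ℓ:ℝ) - ∑ j, (((v j).val : ℝ) + 1))) := by
          apply Finset.sum_le_sum
          intro v hv
          rw [hT, Finset.mem_filter] at hv
          apply Real.one_le_exp
          apply mul_nonneg hε
          have h2 := hv.2.2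
          have : (((∑ j, ((v j).val + 1) : ℕ)) : ℝ) ≤ (ℓ : ℝ) := by exact_mod_cast h2
          push_cast at this
          linarith
      _ ≤ ∑ v ∈ T', Real.exp (ε * ((ℓ:ℝ) - ∑ j, (((v j).val : ℝ) + 1))) := by
          apply Finset.sum_le_sum_of_subset_of_nonneg
          · intro v hv
            rw [hT, Finset.mem_filter] at hv
            rw [hT', Finset.mem_filter]
            exact ⟨hv.1, hv.2.1⟩
          · intro v _ _
            exact (Real.exp_pos _).le
  have step2 : ∑ v ∈ T', Real.exp (ε * ((ℓ:ℝ) - ∑ j, (((v j).val : ℝ) + 1)))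
      = Real.exp (ε * ((ℓ:ℝ) - (m+1))) *
        ∑ v ∈ T', ∏ j, Real.exp (-ε * ((v j).val : ℝ)) := by
    rw [Finset.mul_sum]
    apply Finset.sum_congr rfl
    intro v _
    rw [← Real.exp_sum, ← Real.exp_add]
    congr 1
    have hs : ∑ j, (((v j).val:ℝ)+1) = (∑ j : Fin (m+1), ((v j).val:ℝ)) + (m+1) := by
      rw [Finset.sum_add_distrib]
      simp [Finset.card_univ]
    rw [hs, show (∑ x : Fin (m+1), (-ε * (((v x).val : ℕ):ℝ))) =
      -ε * ∑ x : Fin (m+1), (((v x).val : ℕ):ℝ) from (Finset.mul_sum _ _ _).symm]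
    ring
  set P : Fin (m+1) → Finset (Fin 4) := fun j =>
    if j = 0 then Finset.univ else Finset.univ.filter (fun x : Fin 4 => x.val ≤ 2) with hP
  have hT'P : T' = Fintype.piFinset P := by
    ext v
    rw [hT', Finset.mem_filter, Fintype.mem_piFinset]
    constructor
    · intro hv j
      rw [hP]
      by_cases hj : j = 0
      · simp [hj]
      · simp only [hj, if_false, Finset.mem_filter]
        exact ⟨Finset.mem_univ _, hv.2 j hj⟩
    · intro hv
      refine ⟨Finset.mem_univ _, fun j hj => ?_⟩
      have := hv j
      rw [hP] at this
      simp only [hj, if_false, Finset.mem_filter] at this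
      exact this.2
  have step3 : ∑ v ∈ T', ∏ j, Real.exp (-ε * ((v j).val : ℝ))
      = ∏ j : Fin (m+1), ∑ x ∈ P j, Real.exp (-ε * ((x.val : ℕ) : ℝ)) := by
    rw [hT'P]
    exact (Finset.prod_univ_sum P (fun j x => Real.exp (-ε * ((x.val : ℕ) : ℝ)))).symm
  have step4 : ∏ j : Fin (m+1), ∑ x ∈ P j, Real.exp (-ε * ((x.val : ℕ) : ℝ))
      = (1 + Real.exp (-ε) + Real.exp (-ε*2) + Real.exp (-ε*3)) *
        (1 + Real.exp (-ε) + Real.exp (-ε*2))^m := by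
    rw [Fin.prod_univ_succ]
    congr 1
    · rw [hP]; simp only [if_pos rfl]
      exact sum_fin4_exp ε
    · rw [Finset.prod_congr rfl (g := fun _ => 1 + Real.exp (-ε) + Real.exp (-ε*2))
        (fun i _ => by
          rw [hP]
          simp only [Fin.succ_ne_zero, if_false]
          exact sum_fin4_exp_le2 ε)]
      rw [Finset.prod_const, Finset.card_univ, Fintype.card_fin]
  calc (T.card : ℝ) ≤ _ := step1
    _ = _ := step2
    _ ≤ _ := by rw [step3, step4]

lemma list_sum_getD : ∀ (e : List ℕ), e.sum = ∑ i ∈ Finset.range e.length, e.getD i 0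
  | [] => by simp
  | a :: e => by
    rw [List.sum_cons, List.length_cons, Finset.sum_range_succ']
    simp [list_sum_getD e, Nat.add_comm]

/-- the number of no-homopolymer strands that embed into `L`. -/
lemma strand_card_le (m : ℕ) (L : List (Fin 4)) :
    ((Finset.univ.filter (fun S : NoHomo (m+1) => (List.ofFn S.1).Sublist L)).card : ℕ)
      ≤ ((Finset.univ.filter (fun v : Fin (m+1) → Fin 4 =>
        (∀ j, j ≠ 0 → (v j).val ≤ 2) ∧ (∑ j, ((v j).val + 1)) ≤ L.length)).card : ℕ) := by
  classical
  apply Finset.card_le_card_of_injOn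
    (fun S => (fun j : Fin (m+1) =>
      (⟨min ((enc none (List.ofFn S.1) L).getD j 0) 3, by omega⟩ : Fin 4)))
  · -- maps to
    intro S hS
    rw [Finset.mem_coe, Finset.mem_filter] at hS
    have hsub := hS.2
    set e := enc none (List.ofFn S.1) L with he
    have he_len : e.length = m+1 := by rw [he, enc_length, List.length_ofFn]
    have hall : ∀ x ∈ e, x ≤ 3 := enc_le_three none _ L S.2 (by intro p hp; cases hp)
    have htail : ∀ x ∈ e.tail, x ≤ 2 := enc_tail_le_two none _ L S.2
    have hsum : e.sum + (m+1) ≤ L.length := by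
      have := enc_sum (List.ofFn S.1) none hsub
      rwa [List.length_ofFn] at this
    have hgetD : ∀ j : Fin (m+1), e.getD j.val 0 ≤ 3 := by
      intro j
      have hj : j.val < e.length := by rw [he_len]; exact j.2
      rw [List.getD_eq_getElem _ _ hj]
      exact hall _ (List.getElem_mem _)
    rw [Finset.mem_coe, Finset.mem_filter]
    refine ⟨Finset.mem_univ _, ?_, ?_⟩
    · intro j hj
      simp only
      have hj1 : 1 ≤ j.val := by
        rcases Nat.eq_zero_or_pos j.val with h0 | h1
        · exact absurd (Fin.ext h0) hj
        · exact h1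
      have hjt : j.val - 1 < e.tail.length := by
        rw [List.length_tail, he_len]; omega
      have h5 : e.getD (j.val - 1 + 1) 0 ≤ 2 := by
        have hmem := htail _ (List.getElem_mem (l := e.tail) (n := j.val - 1) (h := hjt))
        rw [List.getElem_tail] at hmem
        rwa [List.getD_eq_getElem _ _ (by rw [he_len]; omega : j.val - 1 + 1 < e.length)]
      have h6 : e.getD j.val 0 ≤ 2 := by
        rwa [show j.val - 1 + 1 = j.val from by omega] at h5
      show min (e.getD j.val 0) 3 ≤ 2
      omega
    · simp only
      have hsum2 : ∑ j : Fin (m+1), (min (e.getD j.val 0) 3 + 1)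
          = (∑ j : Fin (m+1), e.getD j.val 0) + (m+1) := by
        rw [Finset.sum_add_distrib]
        simp only [Finset.card_univ, Fintype.card_fin, Finset.sum_const, smul_eq_mul, mul_one]
        congr 1
        apply Finset.sum_congr rfl
        intro j _
        exact Nat.min_eq_left (hgetD j)
      rw [hsum2]
      have : ∑ j : Fin (m+1), e.getD j.val 0 = e.sum := by
        rw [list_sum_getD, he_len, ← Fin.sum_univ_eq_sum_range]
      omega
  · -- injective
    intro S₁ h₁ S₂ h₂ hf
    simp only [Finset.mem_coe, Finset.mem_filter] at h₁ h₂
    have hlen₁ : (enc none (List.ofFn S₁.1) L).length = m+1 := by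
      rw [enc_length, List.length_ofFn]
    have hlen₂ : (enc none (List.ofFn S₂.1) L).length = m+1 := by
      rw [enc_length, List.length_ofFn]
    have hee : enc none (List.ofFn S₁.1) L = enc none (List.ofFn S₂.1) L := by
      apply List.ext_getElem (by rw [hlen₁, hlen₂])
      intro i hi1 hi2
      have hi : i < m+1 := by rwa [hlen₁] at hi1
      have := congrFun hf ⟨i, hi⟩
      simp only [Fin.mk.injEq] at this
      have b₁ : (enc none (List.ofFn S₁.1) L)[i] ≤ 3 :=
        (enc_le_three none _ L S₁.2 (by intro p hp; cases hp)) _ (List.getElem_mem _)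
      have b₂ : (enc none (List.ofFn S₂.1) L)[i] ≤ 3 :=
        (enc_le_three none _ L S₂.2 (by intro p hp; cases hp)) _ (List.getElem_mem _)
      rw [List.getD_eq_getElem _ _ hi1, List.getD_eq_getElem _ _ hi2] at this
      omega
    have := enc_inj (List.ofFn S₁.1) (List.ofFn S₂.1) L none S₁.2 S₂.2
      (by intro p hp; cases hp) (by intro p hp; cases hp)
      h₁.2 h₂.2 (by rw [List.length_ofFn, List.length_ofFn]) hee
    exact Subtype.ext (List.ofFn_injective this)

lemma analytic_bound (m ℓ : ℕ) (ε : ℝ) (hε : 0 < ε)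
    (hL : (ℓ : ℝ) ≤ (2 - ε) * (m+1)) :
    Real.exp (ε * ((ℓ:ℝ) - (m+1))) *
        ((1 + Real.exp (-ε) + Real.exp (-ε*2) + Real.exp (-ε*3)) *
         (1 + Real.exp (-ε) + Real.exp (-ε*2))^m)
      ≤ (4 * 3^m : ℝ) * Real.exp (-(ε^2/2) * (m+1)) := by
  have hBpos : (0:ℝ) ≤ 1 + Real.exp (-ε) + Real.exp (-ε*2) := by positivity
  have hApos : (0:ℝ) ≤ 1 + Real.exp (-ε) + Real.exp (-ε*2) + Real.exp (-ε*3) := by positivity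
  have hB := key_B ε hε.le
  have hA := key_A ε hε.le
  have hBm : (1 + Real.exp (-ε) + Real.exp (-ε*2))^m ≤ (3 * Real.exp (ε^2/2 - ε))^m :=
    pow_le_pow_left₀ hBpos hB m
  have step : (1 + Real.exp (-ε) + Real.exp (-ε*2) + Real.exp (-ε*3)) *
         (1 + Real.exp (-ε) + Real.exp (-ε*2))^m
      ≤ (4 * Real.exp (ε^2/2 - ε)) * (3 * Real.exp (ε^2/2 - ε))^m := by
    apply mul_le_mul hA hBm (by positivity) (by positivity)
  have e1 : (4 * Real.exp (ε^2/2 - ε)) * (3 * Real.exp (ε^2/2 - ε))^m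
      = (4 * 3^m : ℝ) * Real.exp ((ε^2/2 - ε) * (m+1)) := by
    rw [mul_pow, ← Real.exp_nat_mul]
    rw [show ((ε^2/2 - ε) * (m+1)) = (ε^2/2-ε) + m * (ε^2/2 - ε) by ring, Real.exp_add]
    ring
  calc Real.exp (ε * ((ℓ:ℝ) - (m+1))) *
        ((1 + Real.exp (-ε) + Real.exp (-ε*2) + Real.exp (-ε*3)) *
         (1 + Real.exp (-ε) + Real.exp (-ε*2))^m)
      ≤ Real.exp (ε * ((ℓ:ℝ) - (m+1))) *
        ((4 * 3^m : ℝ) * Real.exp ((ε^2/2 - ε) * (m+1))) := by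
        rw [← e1]
        exact mul_le_mul_of_nonneg_left step (Real.exp_pos _).le
    _ = (4 * 3^m : ℝ) * Real.exp (ε * ((ℓ:ℝ) - (m+1)) + (ε^2/2 - ε) * (m+1)) := by
        rw [Real.exp_add]; ring
    _ ≤ (4 * 3^m : ℝ) * Real.exp (-(ε^2/2) * (m+1)) := by
        apply mul_le_mul_of_nonneg_left _ (by positivity)
        apply Real.exp_le_exp.2
        nlinarith [hε.le]

def gseq (m : ℕ) (x : Fin 4 × (Fin m → Fin 3)) : ℕ → Fin 4
  | 0 => x.1
  | k+1 => (gseq m x k).succAbove (if h : k < m then x.2 ⟨k, h⟩ else 0)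

lemma noHomo_card_ge (m : ℕ) : 4 * 3^m ≤ Fintype.card (NoHomo (m+1)) := by
  classical
  have hinj : Function.Injective (fun x : Fin 4 × (Fin m → Fin 3) =>
      (⟨fun j : Fin (m+1) => gseq m x j.val, by
        show List.IsChain _ _; rw [List.isChain_iff_getElem]
        intro i hi
        rw [List.getElem_ofFn, List.getElem_ofFn]
        simp only [List.length_ofFn] at hi
        have : ∀ (k : ℕ), gseq m x k ≠ gseq m x (k+1) := by
          intro k
          exact (Fin.succAbove_ne _ _).symm
        simpa using this i⟩ : NoHomo (m+1))) := by
    intro x y hxy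
    have hfun : ∀ j : Fin (m+1), gseq m x j.val = gseq m y j.val := by
      intro j
      exact congrFun (congrArg Subtype.val hxy) j
    have hg : ∀ k, k < m + 1 → gseq m x k = gseq m y k := by
      intro k hk
      exact hfun ⟨k, hk⟩
    have h1 : x.1 = y.1 := hg 0 (by omega)
    have h2 : x.2 = y.2 := by
      funext i
      have ha := hg i.val (by omega)
      have hb := hg (i.val + 1) (by omega)
      rw [gseq, gseq, ha] at hb
      simp only [i.2, dif_pos] at hb
      have := Fin.succAbove_right_injective (p := gseq m y i.val) hb
      simpa using this
    exact Prod.ext h1 h2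
  have hcard : Fintype.card (Fin 4 × (Fin m → Fin 3)) = 4 * 3^m := by simp
  rw [← hcard]
  exact Fintype.card_le_of_injective _ hinj

lemma sixteen_le : (16:ℝ) ≤ Real.exp (7/2) := by
  have h1 : (2.7182818283:ℝ) < Real.exp 1 := Real.exp_one_gt_d9
  have h2 : (256:ℝ) ≤ Real.exp 7 := by
    have : ((2.7182818283:ℝ))^7 ≤ (Real.exp 1)^7 :=
      pow_le_pow_left₀ (by norm_num) h1.le 7
    have h3 : (256:ℝ) ≤ (2.7182818283:ℝ)^7 := by norm_num
    calc (256:ℝ) ≤ (2.7182818283:ℝ)^7 := h3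
      _ ≤ (Real.exp 1)^7 := this
      _ = Real.exp 7 := by rw [← Real.exp_nat_mul]; norm_num
  have h4 : Real.exp (7/2) * Real.exp (7/2) = Real.exp 7 := by
    rw [← Real.exp_add]; norm_num
  nlinarith [Real.exp_pos (7/2)]

/-- If ε > 0 and M ≥ 9/ε², then with probability at least 1 - e^{-n} over M
i.i.d. strands drawn uniformly from length-n strands with no homopolymers,
every common supersequence has length at least (2 - ε)n. -/
theorem stmt8 (n M : ℕ) (ε : ℝ) (hε : 0 < ε) (hM : 9 / ε ^ 2 ≤ (M : ℝ)) :
    (1 - Real.exp (-(n : ℝ))) * (Fintype.card (Fin M → NoHomo n)) ≤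
      ((Finset.univ.filter (fun F : Fin M → NoHomo n =>
        ∀ L : List (Fin 4), (∀ i, (List.ofFn (F i).1).Sublist L) →
          (2 - ε) * n ≤ (L.length : ℝ))).card : ℝ) := by
  classical
  rcases Nat.eq_zero_or_pos n with hn | hn
  · subst hn
    simp only [Nat.cast_zero, neg_zero, Real.exp_zero, sub_self, zero_mul]
    positivity
  obtain ⟨m, rfl⟩ : ∃ m, n = m+1 := ⟨n-1, by omega⟩
  have hMε : 9 ≤ (M:ℝ) * ε^2 := by
    have hε2 : (0:ℝ) < ε^2 := by positivity
    rw [div_le_iff₀ hε2] at hM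
    linarith
  -- the strand-count bound for each list L
  set X : ℝ := (4 * 3^m : ℝ) * Real.exp (-(ε^2/2) * (m+1)) with hX
  have hXnn : 0 ≤ X := by positivity
  have strandX : ∀ L : List (Fin 4), (L.length : ℝ) ≤ (2-ε)*(m+1) →
      ((Finset.univ.filter (fun S : NoHomo (m+1) => (List.ofFn S.1).Sublist L)).card : ℝ) ≤ X := by
    intro L hL
    have h1 := strand_card_le m L
    have h2 := card_T m L.length ε hε.le
    have h3 := analytic_bound m L.length ε hε hL
    calc ((Finset.univ.filter (fun S : NoHomo (m+1) => (List.ofFn S.1).Sublist L)).card : ℝ)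
        ≤ _ := by exact_mod_cast h1
      _ ≤ _ := h2
      _ ≤ X := h3
  -- bad set
  set good := Finset.univ.filter (fun F : Fin M → NoHomo (m+1) =>
    ∀ L : List (Fin 4), (∀ i, (List.ofFn (F i).1).Sublist L) →
      (2 - ε) * ((m+1:ℕ):ℝ) ≤ (L.length : ℝ)) with hgood
  set bad := Finset.univ.filter (fun F : Fin M → NoHomo (m+1) =>
    ¬ ∀ L : List (Fin 4), (∀ i, (List.ofFn (F i).1).Sublist L) →
      (2 - ε) * ((m+1:ℕ):ℝ) ≤ (L.length : ℝ)) with hbad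
  have hsplit : good.card + bad.card = Fintype.card (Fin M → NoHomo (m+1)) := by
    rw [hgood, hbad, Finset.card_filter_add_card_filter_not, Finset.card_univ]
  -- list enumeration
  set K := 2*(m+1) with hK
  set Ls : Finset (List (Fin 4)) := (Finset.range K).biUnion
    (fun ℓ => (Finset.univ : Finset (List.Vector (Fin 4) ℓ)).image (fun w => w.toList)) with hLs
  set E : List (Fin 4) → Finset (Fin M → NoHomo (m+1)) := fun L =>
    Finset.univ.filter (fun F => (∀ i, (List.ofFn (F i).1).Sublist L) ∧
      (L.length : ℝ) < (2-ε)*(m+1)) with hE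
  have hbadsub : bad ⊆ Ls.biUnion E := by
    intro F hF
    rw [hbad, Finset.mem_filter] at hF
    have hF2 := hF.2
    push_neg at hF2
    obtain ⟨L, hL1, hL2⟩ := hF2
    have hL2' : (L.length : ℝ) < (2-ε)*(m+1) := by exact_mod_cast hL2
    have hlen : L.length < K := by
      have : (L.length : ℝ) < 2*(m+1) := by nlinarith [hε, Nat.cast_nonneg (α := ℝ) (m+1)]
      rw [hK]
      exact_mod_cast (by push_cast; linarith : (L.length : ℝ) < ((2*(m+1) : ℕ) : ℝ))
    apply Finset.mem_biUnion.2
    refine ⟨L, ?_, ?_⟩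
    · rw [hLs]
      apply Finset.mem_biUnion.2
      exact ⟨L.length, Finset.mem_range.2 hlen,
        Finset.mem_image.2 ⟨⟨L, rfl⟩, Finset.mem_univ _, rfl⟩⟩
    · rw [hE]
      exact Finset.mem_filter.2 ⟨Finset.mem_univ _, hL1, hL2'⟩
  have hEcard : ∀ L : List (Fin 4), ((E L).card : ℝ) ≤ X^M := by
    intro L
    by_cases hL : (L.length : ℝ) < (2-ε)*(m+1)
    · have hEeq : E L = Fintype.piFinset (fun _ : Fin M =>
        Finset.univ.filter (fun S : NoHomo (m+1) => (List.ofFn S.1).Sublist L)) := by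
        ext F
        rw [hE]
        simp only [Finset.mem_filter, Fintype.mem_piFinset, Finset.mem_univ, true_and]
        constructor
        · exact fun h i => h.1 i
        · exact fun h => ⟨h, hL⟩
      rw [hEeq]
      rw [show ((Fintype.piFinset (fun _ : Fin M =>
        Finset.univ.filter (fun S : NoHomo (m+1) => (List.ofFn S.1).Sublist L))).card)
        = ((Finset.univ.filter (fun S : NoHomo (m+1) => (List.ofFn S.1).Sublist L)).card)^M from by
          rw [Fintype.card_piFinset]; simp]
      push_cast
      exact pow_le_pow_left₀ (by positivity) (strandX L hL.le) M
    · have : E L = ∅ := by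
        rw [hE]
        apply Finset.filter_false_of_mem
        intro F _
        exact fun h => hL h.2
      rw [this]
      simp only [Finset.card_empty, Nat.cast_zero]
      positivity
  have hLscard : (Ls.card : ℝ) ≤ (4^K : ℝ)/3 := by
    have h1 : Ls.card ≤ ∑ ℓ ∈ Finset.range K, 4^ℓ := by
      rw [hLs]
      calc Ls.card ≤ ∑ ℓ ∈ Finset.range K,
          ((Finset.univ : Finset (List.Vector (Fin 4) ℓ)).image (fun w => w.toList)).card :=
            Finset.card_biUnion_le
        _ ≤ ∑ ℓ ∈ Finset.range K, 4^ℓ := by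
            apply Finset.sum_le_sum
            intro ℓ _
            calc ((Finset.univ : Finset (List.Vector (Fin 4) ℓ)).image (fun w => w.toList)).card
                ≤ (Finset.univ : Finset (List.Vector (Fin 4) ℓ)).card := Finset.card_image_le
              _ = 4^ℓ := by rw [Finset.card_univ, card_vector]; simp
    have h2 : ((∑ ℓ ∈ Finset.range K, 4^ℓ : ℕ) : ℝ) = ((4:ℝ)^K - 1)/3 := by
      push_cast
      rw [geom_sum_eq (by norm_num : (4:ℝ) ≠ 1)]
      norm_num
    calc (Ls.card : ℝ) ≤ ((∑ ℓ ∈ Finset.range K, 4^ℓ : ℕ) : ℝ) := by exact_mod_cast h1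
      _ = ((4:ℝ)^K - 1)/3 := h2
      _ ≤ (4^K : ℝ)/3 := by
          have := pow_nonneg (by norm_num : (0:ℝ) ≤ 4) K
          linarith
  -- total bad bound
  have hbadcard : (bad.card : ℝ) ≤ ((4:ℝ)^K/3) * X^M := by
    have h1 : bad.card ≤ ∑ L ∈ Ls, (E L).card :=
      le_trans (Finset.card_le_card hbadsub) Finset.card_biUnion_le
    have h2 : ((∑ L ∈ Ls, (E L).card : ℕ) : ℝ) ≤ ∑ L ∈ Ls, X^M := by
      push_cast
      exact Finset.sum_le_sum (fun L _ => hEcard L)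
    calc (bad.card : ℝ) ≤ ((∑ L ∈ Ls, (E L).card : ℕ) : ℝ) := by exact_mod_cast h1
      _ ≤ ∑ L ∈ Ls, X^M := h2
      _ = Ls.card * X^M := by rw [Finset.sum_const, nsmul_eq_mul]
      _ ≤ ((4:ℝ)^K/3) * X^M := by
          apply mul_le_mul_of_nonneg_right hLscard (by positivity)
  -- numeric comparison
  have hN : (4 * 3^m : ℝ) ≤ (Fintype.card (NoHomo (m+1)) : ℝ) := by
    exact_mod_cast noHomo_card_ge m
  have hCfun : (Fintype.card (Fin M → NoHomo (m+1)) : ℝ)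
      = (Fintype.card (NoHomo (m+1)) : ℝ)^M := by
    rw [Fintype.card_fun]
    push_cast
    simp
  have hfinal : ((4:ℝ)^K/3) * X^M ≤
      Real.exp (-((m+1:ℕ):ℝ)) * (Fintype.card (Fin M → NoHomo (m+1)) : ℝ) := by
    have hXexp : X^M = (4*3^m:ℝ)^M * Real.exp (-(ε^2/2) * (m+1) * M) := by
      rw [hX, mul_pow, ← Real.exp_nat_mul]
      ring_nf
    have hexpM : Real.exp (-(ε^2/2) * (m+1) * M) ≤ Real.exp (-(9/2) * (m+1)) := by
      apply Real.exp_le_exp.2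
      have hm1 : (0:ℝ) ≤ (m+1:ℝ) := by positivity
      nlinarith
    have hpow : ((4:ℝ)^K/3) * Real.exp (-(9/2) * (m+1)) ≤ Real.exp (-((m+1:ℕ):ℝ)) := by
      rw [hK]
      have h16 : (4:ℝ)^(2*(m+1)) = 16^(m+1) := by
        rw [pow_mul]; norm_num
      have h162 : (16:ℝ)^(m+1) ≤ Real.exp ((7/2) * ((m:ℝ)+1)) := by
        rw [show ((7:ℝ)/2) * ((m:ℝ)+1) = ((m+1:ℕ):ℝ) * (7/2) by push_cast; ring,
          Real.exp_nat_mul]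
        exact pow_le_pow_left₀ (by norm_num) sixteen_le (m+1)
      have h163 : Real.exp ((7/2)*((m:ℝ)+1)) * Real.exp (-(9/2)*(m+1))
          = Real.exp (-((m+1:ℕ):ℝ)) := by
        rw [← Real.exp_add]
        congr 1
        push_cast
        ring
      calc (4:ℝ)^(2*(m+1))/3 * Real.exp (-(9/2) * (m+1))
          ≤ (16:ℝ)^(m+1) * Real.exp (-(9/2) * (m+1)) := by
            apply mul_le_mul_of_nonneg_right _ (Real.exp_pos _).le
            rw [h16]; linarith [pow_nonneg (by norm_num : (0:ℝ) ≤ 16) (m+1)]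
        _ ≤ Real.exp ((7/2)*((m:ℝ)+1)) * Real.exp (-(9/2)*(m+1)) := by
            apply mul_le_mul_of_nonneg_right h162 (Real.exp_pos _).le
        _ = Real.exp (-((m+1:ℕ):ℝ)) := h163
    calc ((4:ℝ)^K/3) * X^M
        = ((4:ℝ)^K/3) * ((4*3^m:ℝ)^M * Real.exp (-(ε^2/2) * (m+1) * M)) := by rw [hXexp]
      _ ≤ ((4:ℝ)^K/3) * ((4*3^m:ℝ)^M * Real.exp (-(9/2) * (m+1))) := by
          apply mul_le_mul_of_nonneg_left _ (by positivity)
          exact mul_le_mul_of_nonneg_left hexpM (by positivity)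
      _ = (((4:ℝ)^K/3) * Real.exp (-(9/2) * (m+1))) * (4*3^m:ℝ)^M := by ring
      _ ≤ Real.exp (-((m+1:ℕ):ℝ)) * (4*3^m:ℝ)^M := by
          apply mul_le_mul_of_nonneg_right hpow (by positivity)
      _ ≤ Real.exp (-((m+1:ℕ):ℝ)) * (Fintype.card (Fin M → NoHomo (m+1)) : ℝ) := by
          rw [hCfun]
          apply mul_le_mul_of_nonneg_left _ (Real.exp_pos _).le
          exact pow_le_pow_left₀ (by positivity) hN M
  -- conclude
  have hbadfinal : (bad.card : ℝ) ≤
      Real.exp (-((m+1:ℕ):ℝ)) * (Fintype.card (Fin M → NoHomo (m+1)) : ℝ) :=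
    le_trans hbadcard hfinal
  have hgoodcast : (good.card : ℝ) + (bad.card : ℝ)
      = (Fintype.card (Fin M → NoHomo (m+1)) : ℝ) := by exact_mod_cast hsplit
  have : (1 - Real.exp (-((m+1:ℕ):ℝ))) * (Fintype.card (Fin M → NoHomo (m+1)) : ℝ)
      ≤ (good.card : ℝ) := by nlinarith [hbadfinal, hgoodcast]
  exact this
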